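/- Fix nonnegative integers k, x₀, ℓ with 2k ≤ ℓ. For y with ℓ − 2x₀ ≤ y ≤ ℓ + 2k − 1 − 2x₀ and y ≥ 0, let z = ℓ − x₀ − y, t = 2x₀ + y + 1 − ℓ, r = t + 2k, and define F(y) = Σ_{i=t}^{x₀} Σ_{j=r−2i}^{2k−i} (x₀ choose i)·(y choose j)·(z choose (2k−i−j)) (binomials are 0 for out-of-range indices). Then F(y+1) ≤ F(y). -/

import Mathlib

/-- Binomial coefficient on integers: `0` when the lower index is negative or
exceeds the upper index. -/
def ichoose (p q : ℤ) : ℤ :=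
  if q < 0 ∨ p < q then 0 else (p.toNat).choose q.toNat

/-- With `z = ℓ−x₀−y`, `t = 2x₀+y+1−ℓ`, `r = t+2k`:
`F(y) = Σ_{i=t}^{x₀} Σ_{j=r−2i}^{2k−i} (x₀ choose i)(y choose j)(z choose 2k−i−j)`. -/
noncomputable def F (k x₀ ℓ y : ℕ) : ℤ :=
  ∑ i ∈ Finset.Icc ((2 * x₀ + y + 1 : ℤ) - ℓ) (x₀ : ℤ),
    ∑ j ∈ Finset.Icc ((2 * x₀ + y + 1 : ℤ) - ℓ + 2 * k - 2 * i) ((2 * k : ℤ) - i),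
      ichoose x₀ i * ichoose y j * ichoose ((ℓ : ℤ) - x₀ - y) ((2 * k : ℤ) - i - j)

lemma ichoose_zero (p : ℤ) (hp : 0 ≤ p) : ichoose p 0 = 1 := by
  unfold ichoose
  rw [if_neg (by omega)]
  simp

lemma ichoose_nonneg (p q : ℤ) : 0 ≤ ichoose p q := by
  unfold ichoose; split
  · exact le_refl 0
  · exact Int.natCast_nonneg _

lemma ichoose_neg (p q : ℤ) (h : q < 0) : ichoose p q = 0 := by
  simp [ichoose, h]

lemma ichoose_natCast (m n : ℕ) : ichoose (m : ℤ) (n : ℤ) = m.choose n := by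
  unfold ichoose
  split
  · rename_i h
    rcases h with h | h
    · exfalso; omega
    · rw [Nat.choose_eq_zero_of_lt (by exact_mod_cast h)]; simp
  · simp

lemma ichoose_pascal (p q : ℤ) (hp : 0 ≤ p) :
    ichoose (p + 1) q = ichoose p q + ichoose p (q - 1) := by
  obtain ⟨m, rfl⟩ := Int.eq_ofNat_of_zero_le hp
  rcases lt_or_ge q 0 with h | h
  · rw [ichoose_neg _ _ h, ichoose_neg _ _ h, ichoose_neg _ _ (by omega)]; ring
  obtain ⟨n, rfl⟩ := Int.eq_ofNat_of_zero_le h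
  rcases Nat.eq_zero_or_pos n with rfl | hn
  · simp only [Nat.cast_zero]
    rw [ichoose_zero _ (by omega), ichoose_zero _ hp, ichoose_neg _ _ (by norm_num)]
    ring
  · obtain ⟨n', rfl⟩ := Nat.exists_eq_add_of_le hn
    rw [show ((m : ℤ) + 1) = ((m + 1 : ℕ) : ℤ) by push_cast; ring]
    rw [show ((1 + n' : ℕ) : ℤ) - 1 = ((n' : ℕ) : ℤ) by push_cast; ring]
    rw [show ((1 + n' : ℕ) : ℤ) = ((n' + 1 : ℕ) : ℤ) by push_cast; ring]
    rw [ichoose_natCast, ichoose_natCast, ichoose_natCast]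
    rw [Nat.choose_succ_succ]
    push_cast; ring

lemma insert_Icc_left (a s : ℤ) (h : a ≤ s) :
    Finset.Icc a s = insert a (Finset.Icc (a + 1) s) := by
  ext j; simp only [Finset.mem_Icc, Finset.mem_insert]; omega

lemma insert_Icc_top (a s : ℤ) (h : a ≤ s) :
    Finset.Icc a s = insert s (Finset.Icc a (s - 1)) := by
  ext j; simp only [Finset.mem_Icc, Finset.mem_insert]; omega

lemma sum_shift (a s : ℤ) (g : ℤ → ℤ) :
    ∑ j ∈ Finset.Icc (a + 1) s, g j = ∑ j ∈ Finset.Icc a (s - 1), g (j + 1) := by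
  rw [show Finset.Icc (a + 1) s
        = Finset.map (addRightEmbedding 1) (Finset.Icc a (s - 1)) by
      rw [Finset.map_add_right_Icc]; congr 1; omega]
  rw [Finset.sum_map]
  rfl

lemma inner_diff (y z a s : ℤ) (hy : 0 ≤ y) (hz : 1 ≤ z) (has : a ≤ s) :
    ∑ j ∈ Finset.Icc a s, ichoose y j * ichoose z (s - j)
      = (∑ j ∈ Finset.Icc (a + 1) s, ichoose (y + 1) j * ichoose (z - 1) (s - j))
        + ichoose y a * ichoose (z - 1) (s - a) := by
  have pz : ∀ q : ℤ, ichoose z q = ichoose (z - 1) q + ichoose (z - 1) (q - 1) := by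
    intro q
    have h := ichoose_pascal (z - 1) q (by omega)
    rw [sub_add_cancel] at h
    exact h
  have py : ∀ j : ℤ, ichoose (y + 1) j = ichoose y j + ichoose y (j - 1) :=
    fun j => ichoose_pascal y j hy
  have h1 : ∑ j ∈ Finset.Icc a s, ichoose y j * ichoose z (s - j)
      = (∑ j ∈ Finset.Icc a s, ichoose y j * ichoose (z - 1) (s - j))
        + ∑ j ∈ Finset.Icc a s, ichoose y j * ichoose (z - 1) (s - j - 1) := by
    rw [← Finset.sum_add_distrib]
    refine Finset.sum_congr rfl fun j _ => ?_
    rw [pz (s - j)]; ring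
  have h2 : ∑ j ∈ Finset.Icc (a + 1) s, ichoose (y + 1) j * ichoose (z - 1) (s - j)
      = (∑ j ∈ Finset.Icc (a + 1) s, ichoose y j * ichoose (z - 1) (s - j))
        + ∑ j ∈ Finset.Icc (a + 1) s, ichoose y (j - 1) * ichoose (z - 1) (s - j) := by
    rw [← Finset.sum_add_distrib]
    refine Finset.sum_congr rfl fun j _ => ?_
    rw [py j]; ring
  have e1 : ∑ j ∈ Finset.Icc a s, ichoose y j * ichoose (z - 1) (s - j)
      = ichoose y a * ichoose (z - 1) (s - a)
        + ∑ j ∈ Finset.Icc (a + 1) s, ichoose y j * ichoose (z - 1) (s - j) := by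
    rw [insert_Icc_left a s has, Finset.sum_insert (by simp)]
  have e2 : ∑ j ∈ Finset.Icc a s, ichoose y j * ichoose (z - 1) (s - j - 1)
      = ∑ j ∈ Finset.Icc a (s - 1), ichoose y j * ichoose (z - 1) (s - j - 1) := by
    rw [insert_Icc_top a s has, Finset.sum_insert (by simp)]
    rw [ichoose_neg (z - 1) (s - s - 1) (by omega)]
    ring
  have e3 : ∑ j ∈ Finset.Icc (a + 1) s, ichoose y (j - 1) * ichoose (z - 1) (s - j)
      = ∑ j ∈ Finset.Icc a (s - 1), ichoose y j * ichoose (z - 1) (s - j - 1) := by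
    rw [sum_shift a s (fun j => ichoose y (j - 1) * ichoose (z - 1) (s - j))]
    refine Finset.sum_congr rfl fun j _ => ?_
    rw [show j + 1 - 1 = j by ring, show s - (j + 1) = s - j - 1 by ring]
  rw [h1, h2, e1, e2, e3]; ring

lemma key (x₀ c t z y : ℤ) (hy : 0 ≤ y) (hz : 1 ≤ z) (htx : t + z = x₀ + 1) :
    ∑ i ∈ Finset.Icc (t + 1) x₀, ∑ j ∈ Finset.Icc (t + 1 + c - 2 * i) (c - i),
        ichoose x₀ i * ichoose (y + 1) j * ichoose (z - 1) (c - i - j)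
      ≤ ∑ i ∈ Finset.Icc t x₀, ∑ j ∈ Finset.Icc (t + c - 2 * i) (c - i),
        ichoose x₀ i * ichoose y j * ichoose z (c - i - j) := by
  have htx0 : t ≤ x₀ := by omega
  have hstep : ∀ i ∈ Finset.Icc t x₀,
      ∑ j ∈ Finset.Icc (t + c - 2 * i) (c - i),
          ichoose x₀ i * ichoose y j * ichoose z (c - i - j)
        = (∑ j ∈ Finset.Icc (t + 1 + c - 2 * i) (c - i),
            ichoose x₀ i * ichoose (y + 1) j * ichoose (z - 1) (c - i - j))
          + ichoose x₀ i * (ichoose y (t + c - 2 * i) * ichoose (z - 1) (i - t)) := by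
    intro i hi
    rw [Finset.mem_Icc] at hi
    have has : t + c - 2 * i ≤ c - i := by omega
    have hd := inner_diff y z (t + c - 2 * i) (c - i) hy hz has
    have l1 : ∑ j ∈ Finset.Icc (t + c - 2 * i) (c - i),
        ichoose x₀ i * ichoose y j * ichoose z (c - i - j)
        = ichoose x₀ i * ∑ j ∈ Finset.Icc (t + c - 2 * i) (c - i),
            ichoose y j * ichoose z (c - i - j) := by
      rw [Finset.mul_sum]
      refine Finset.sum_congr rfl fun j _ => ?_
      rw [show c - i - j = c - i - j from rfl]; ring
    have l2 : ∑ j ∈ Finset.Icc (t + 1 + c - 2 * i) (c - i),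
        ichoose x₀ i * ichoose (y + 1) j * ichoose (z - 1) (c - i - j)
        = ichoose x₀ i * ∑ j ∈ Finset.Icc (t + 1 + c - 2 * i) (c - i),
            ichoose (y + 1) j * ichoose (z - 1) (c - i - j) := by
      rw [Finset.mul_sum]
      refine Finset.sum_congr rfl fun j _ => ?_
      ring
    rw [show t + c - 2 * i + 1 = t + 1 + c - 2 * i by ring,
      show c - i - (t + c - 2 * i) = i - t by ring] at hd
    rw [l1, l2, hd, mul_add]
  rw [Finset.sum_congr rfl hstep, Finset.sum_add_distrib]
  have hsplit : Finset.Icc t x₀ = insert t (Finset.Icc (t + 1) x₀) :=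
    insert_Icc_left t x₀ htx0
  have hPt : ∑ j ∈ Finset.Icc (t + 1 + c - 2 * t) (c - t),
      ichoose x₀ t * ichoose (y + 1) j * ichoose (z - 1) (c - t - j) = 0 := by
    rw [Finset.Icc_eq_empty (by omega)]; rfl
  rw [hsplit, Finset.sum_insert (by simp), hPt, zero_add]
  refine le_add_of_nonneg_right ?_
  refine Finset.sum_nonneg fun i _ => ?_
  exact mul_nonneg (ichoose_nonneg _ _) (mul_nonneg (ichoose_nonneg _ _) (ichoose_nonneg _ _))

theorem stmt_5 (k x₀ ℓ y : ℕ) (hkℓ : 2 * k ≤ ℓ)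
    (hy1 : ℓ - 2 * x₀ ≤ y) (hy2 : y + 2 * x₀ + 1 ≤ ℓ + 2 * k) :
    F k x₀ ℓ (y + 1) ≤ F k x₀ ℓ y := by
  have hy1' : (ℓ : ℤ) ≤ y + 2 * x₀ := by
    have := Nat.sub_le_iff_le_add.mp hy1
    push_cast
    omega
  set t : ℤ := 2 * (x₀ : ℤ) + y + 1 - ℓ with ht
  set z : ℤ := (ℓ : ℤ) - x₀ - y with hz
  rcases le_or_gt z 0 with hz0 | hz0
  · -- both sums empty
    have h1 : Finset.Icc ((2 * (x₀ : ℤ) + y + 1 : ℤ) - ℓ) (x₀ : ℤ) = ∅ :=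
      Finset.Icc_eq_empty (by omega)
    have h2 : Finset.Icc ((2 * (x₀ : ℤ) + (y + 1 : ℕ) + 1 : ℤ) - ℓ) (x₀ : ℤ) = ∅ :=
      Finset.Icc_eq_empty (by push_cast; omega)
    unfold F
    rw [h1, h2]
    simp
  · have hkey := key (x₀ : ℤ) (2 * k) t z y (by positivity) (by omega) (by omega)
    have eR : F k x₀ ℓ y
        = ∑ i ∈ Finset.Icc t (x₀ : ℤ), ∑ j ∈ Finset.Icc (t + 2 * k - 2 * i) (2 * k - i),
            ichoose x₀ i * ichoose y j * ichoose z (2 * k - i - j) := by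
      unfold F
      refine Finset.sum_congr (by congr 1) fun i _ => ?_
      refine Finset.sum_congr (by congr 1 <;> ring) fun j _ => rfl
    have eL : F k x₀ ℓ (y + 1)
        = ∑ i ∈ Finset.Icc (t + 1) (x₀ : ℤ), ∑ j ∈ Finset.Icc (t + 1 + 2 * k - 2 * i) (2 * k - i),
            ichoose x₀ i * ichoose (y + 1 : ℤ) j * ichoose (z - 1) (2 * k - i - j) := by
      unfold F
      refine Finset.sum_congr (by congr 1; push_cast; ring) fun i _ => ?_
      refine Finset.sum_congr (by congr 1 <;> (push_cast; ring)) fun j _ => ?_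
      push_cast
      rw [show (ℓ : ℤ) - ↑x₀ - (↑y + 1) = z - 1 by omega]
    rw [eL, eR]
    exact hkey
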